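/- Let f be a symmetric polynomial in n variables over ℂ that vanishes whenever b_0+1 of its variables are set equal to 0. Then for any partition λ of n with parts at most k, the evaluated polynomial φ_λ(f) is divisible by ∏_{a=1}^{k} ∏_{j=1}^{m_a(λ)} (x_j^{(a)})^{max(a-b_0,0)}. -/

import Mathlib

open MvPolynomial

section Aux
open Finset

lemma coeff_kill {n b0 : ℕ} (f : MvPolynomial (Fin n) ℂ) (d : Fin n →₀ ℕ)
    (hd : ∀ i : Fin n, (i:ℕ) < b0+1 → d i = 0) :
    coeff d (aeval (fun i : Fin n => if (i:ℕ) < b0+1 then (0:MvPolynomial (Fin n) ℂ) else X i) f)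
      = coeff d f := by
  set g := fun i : Fin n => if (i:ℕ) < b0+1 then (0:MvPolynomial (Fin n) ℂ) else X i with hg
  conv_lhs => rw [f.as_sum]
  rw [map_sum, MvPolynomial.coeff_sum]
  have hterm : ∀ u ∈ f.support,
      coeff d (aeval g (monomial u (coeff u f))) = if u = d then coeff u f else 0 := by
    intro u _
    rw [aeval_monomial]
    by_cases hz : ∃ i ∈ u.support, (i:ℕ) < b0+1
    · obtain ⟨i, hi, hlt⟩ := hz
      have h0 : (u.prod fun i k => g i ^ k) = 0 :=
        Finset.prod_eq_zero hi (by simp [hg, hlt, Nat.lt_succ_iff.mp hlt, zero_pow (Finsupp.mem_support_iff.mp hi)])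
      have hud : u ≠ d := fun h => (Finsupp.mem_support_iff.mp hi) (by rw [h]; exact hd i hlt)
      simp [h0, hud]
    · push_neg at hz
      have h1 : (u.prod fun i k => g i ^ k) = monomial u 1 := by
        rw [monomial_eq, map_one, one_mul]
        exact Finsupp.prod_congr fun i hi => by simp [hg, hz i hi, not_le.mpr (Nat.lt_of_succ_le (hz i hi))]
      rw [h1, algebraMap_eq, C_mul_monomial, mul_one, coeff_monomial]
  rw [Finset.sum_congr rfl hterm, Finset.sum_ite_eq' f.support d (fun u => coeff u f)]
  split_ifs with h
  · rfl
  · exact (MvPolynomial.notMem_support_iff.mp h).symm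

lemma zeros_le {n b0 : ℕ} (hn : b0 + 1 ≤ n) (f : MvPolynomial (Fin n) ℂ)
    (hsym : f.IsSymmetric)
    (hvan : aeval (fun i : Fin n => if (i:ℕ) < b0+1 then (0:MvPolynomial (Fin n) ℂ) else X i) f = 0)
    (d : Fin n →₀ ℕ) (hd : d ∈ f.support) :
    (Finset.univ.filter fun i => d i = 0).card ≤ b0 := by
  by_contra hlt
  push_neg at hlt
  -- the support of d is small
  set t : Finset (Fin n) := Finset.univ.filter (fun i => ¬ (i:ℕ) < b0+1) with ht
  have hcards : d.support.card + (Finset.univ.filter fun i => d i = 0).card = n := by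
    have h1 := Finset.card_filter_add_card_filter_not
      (s := (Finset.univ : Finset (Fin n))) (p := fun i => d i = 0)
    have hsupp : (Finset.univ.filter fun a => ¬ (fun i => d i = 0) a) = d.support := by
      ext i; simp [Finsupp.mem_support_iff]
    rw [hsupp, Finset.card_univ, Fintype.card_fin] at h1
    omega
  have htcard : t.card = n - (b0+1) := by
    have hlt' : (Finset.univ.filter fun i : Fin n => (i:ℕ) < b0+1).card = b0+1 := by
      have : (Finset.univ.filter fun i : Fin n => (i:ℕ) < b0+1).card
          = (Finset.range (b0+1)).card :=
        Finset.card_nbij (i := Fin.val) (by intro a ha; simp at ha ⊢; exact ha)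
          (Fin.val_injective.injOn)
          (by intro j hj; simp at hj ⊢; exact ⟨⟨j, lt_of_lt_of_le (Nat.lt_succ_of_le hj) hn⟩, hj, rfl⟩)
      simpa using this
    have h1 := Finset.card_filter_add_card_filter_not
      (s := (Finset.univ : Finset (Fin n))) (p := fun i : Fin n => (i:ℕ) < b0+1)
    have hneg : (Finset.univ.filter fun a : Fin n => ¬ (fun i : Fin n => (i:ℕ) < b0+1) a) = t := by
      ext i; simp [ht]
    rw [hneg, hlt', Finset.card_univ, Fintype.card_fin] at h1
    omega
  have hle : d.support.card ≤ t.card := by omega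
  obtain ⟨t', ht't, ht'card⟩ := Finset.exists_subset_card_eq hle
  have e0 : {x // x ∈ d.support} ≃ {x // x ∈ t'} := Finset.equivOfCardEq ht'card.symm
  set σ : Equiv.Perm (Fin n) := e0.extendSubtype with hσ
  have hmem : ∀ i ∈ d.support, σ i ∈ t' := by
    intro i hi
    rw [hσ, e0.extendSubtype_apply_of_mem i hi]
    exact (e0 ⟨i, hi⟩).2
  have hmd : ∀ j : Fin n, (j:ℕ) < b0+1 → (Finsupp.mapDomain σ d) j = 0 := by
    intro j hj
    rw [Finsupp.mapDomain_equiv_apply]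
    by_contra h
    have hs : σ.symm j ∈ d.support := Finsupp.mem_support_iff.mpr h
    have := ht't (hmem _ hs)
    rw [Equiv.apply_symm_apply] at this
    rw [ht] at this
    simp at this
    omega
  have hcoe : coeff (Finsupp.mapDomain σ d) f = coeff d f := by
    conv_lhs => rw [← hsym σ]
    exact coeff_rename_mapDomain σ σ.injective f d
  have := coeff_kill f (Finsupp.mapDomain σ d) hmd
  rw [hvan, coeff_zero] at this
  rw [hcoe] at this
  exact Finsupp.mem_support_iff.mp hd this.symm

end Aux

/-- `b` groups the `n` variables into blocks: for each index `p = (a, i)` (the `i`-th block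
of size `a+1`), exactly `a+1` of the variables are sent to `p`. -/
def IsBlockMap {k n : ℕ} (m : Fin k → ℕ) (b : Fin n → (a : Fin k) × Fin (m a)) : Prop :=
  ∀ p : (a : Fin k) × Fin (m a),
    (Finset.univ.filter fun i => b i = p).card = (p.1 : ℕ) + 1

/-- Let `f` be a symmetric polynomial in `n` variables over `ℂ` vanishing
whenever `b₀ + 1` of its variables are set equal to `0`.  Then for any partition `λ` of `n`
with parts at most `k` (multiplicities `m`), and any block evaluation `φ_λ` determined by a
block map `b`, the evaluated polynomial `φ_λ(f)` is divisible by
`∏_{a=1}^{k} ∏_{j=1}^{m_a} (x_j^{(a)})^{max (a - b₀) 0}`. -/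
theorem zero_vanishing_divisibility (k n b0 : ℕ) (f : MvPolynomial (Fin n) ℂ)
    (hsym : f.IsSymmetric)
    (hvan : b0 + 1 ≤ n →
      aeval (fun i : Fin n => if (i : ℕ) < b0 + 1 then (0 : MvPolynomial (Fin n) ℂ) else X i)
        f = 0)
    (m : Fin k → ℕ) (hm : ∑ a : Fin k, ((a : ℕ) + 1) * m a = n)
    (b : Fin n → (a : Fin k) × Fin (m a)) (hb : IsBlockMap m b) :
    ((∏ p : (a : Fin k) × Fin (m a), X p ^ (((p.1 : ℕ) + 1) - b0)) :
        MvPolynomial ((a : Fin k) × Fin (m a)) ℂ)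
      ∣ aeval (fun i => X (b i)) f := by
  classical
  set E : ((a : Fin k) × Fin (m a)) →₀ ℕ :=
    Finsupp.equivFunOnFinite.symm (fun p => ((p.1 : ℕ) + 1) - b0) with hEdef
  have hE : ∀ p, E p = ((p.1 : ℕ) + 1) - b0 := fun p => rfl
  have hprod : ((∏ p : (a : Fin k) × Fin (m a), X p ^ (((p.1 : ℕ) + 1) - b0)) :
      MvPolynomial ((a : Fin k) × Fin (m a)) ℂ) = monomial E 1 := by
    rw [Finset.prod_congr rfl (fun p _ => by rw [← hE p])]
    rw [monomial_eq, map_one, one_mul, Finsupp.prod]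
    exact (Finset.prod_subset (Finset.subset_univ _)
      (by intro p _ hp; simp only [Finsupp.mem_support_iff, not_not] at hp
          simp [hp])).symm
  have hF : aeval (fun i => X (b i)) f = rename b f :=
    DFunLike.congr_fun (algHom_ext fun i => by simp [aeval_X, rename_X]) f
  have key : ∀ d ∈ (rename b f).support, E ≤ d := by
    intro d hd
    rw [Finsupp.le_def]
    intro p
    obtain ⟨u, hu, hcu⟩ := coeff_rename_ne_zero b f d (MvPolynomial.mem_support_iff.mp hd)
    rw [hE p, ← hu]
    have hdp : (Finsupp.mapDomain b u) p = ∑ i ∈ u.support, if b i = p then u i else 0 := by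
      rw [Finsupp.mapDomain, Finsupp.sum_apply]
      exact Finset.sum_congr rfl fun i _ => Finsupp.single_apply
    by_cases hb0 : b0 + 1 ≤ n
    · have hz := zeros_le hb0 f hsym (hvan hb0) u (MvPolynomial.mem_support_iff.mpr hcu)
      set s := u.support.filter (fun i => b i = p) with hs
      have h1 : ∑ i ∈ u.support, (if b i = p then u i else 0) = ∑ i ∈ s, u i :=
        (Finset.sum_filter _ _).symm
      have h2 : s.card ≤ ∑ i ∈ s, u i := by
        calc s.card = ∑ _i ∈ s, 1 := by simp
          _ ≤ ∑ i ∈ s, u i := Finset.sum_le_sum fun i hi => Nat.one_le_iff_ne_zero.mpr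
              (Finsupp.mem_support_iff.mp (Finset.mem_filter.mp hi).1)
      have h3 : (p.1 : ℕ) + 1 ≤ s.card + b0 := by
        have hsub : (Finset.univ.filter fun i => b i = p) ⊆
            s ∪ (Finset.univ.filter fun i => u i = 0) := by
          intro i hi
          simp only [Finset.mem_filter, Finset.mem_univ, true_and] at hi
          by_cases h0 : u i = 0
          · exact Finset.mem_union_right _ (by simp [h0])
          · exact Finset.mem_union_left _
              (Finset.mem_filter.mpr ⟨Finsupp.mem_support_iff.mpr h0, hi⟩)
        calc (p.1 : ℕ) + 1 = (Finset.univ.filter fun i => b i = p).card := (hb p).symm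
          _ ≤ (s ∪ (Finset.univ.filter fun i => u i = 0)).card := Finset.card_le_card hsub
          _ ≤ s.card + (Finset.univ.filter fun i => u i = 0).card := Finset.card_union_le _ _
          _ ≤ s.card + b0 := by omega
      rw [hdp, h1]
      omega
    · have hmp : 1 ≤ m p.1 := Fin.pos p.2
      have hle : ((p.1 : ℕ) + 1) * m p.1 ≤ n := by
        rw [← hm]
        exact Finset.single_le_sum (f := fun a : Fin k => ((a : ℕ) + 1) * m a)
          (fun a _ => Nat.zero_le _) (Finset.mem_univ p.1)
      have : (p.1 : ℕ) + 1 ≤ n := le_trans (Nat.le_mul_of_pos_right _ hmp) hle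
      omega
  rw [hprod, hF]
  refine ⟨∑ d ∈ (rename b f).support, monomial (d - E) (coeff d (rename b f)), ?_⟩
  conv_lhs => rw [(rename b f).as_sum]
  rw [Finset.mul_sum]
  exact Finset.sum_congr rfl fun d hd => by
    rw [monomial_mul, one_mul, add_tsub_cancel_of_le (key d hd)]
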